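/- Let ≤ be a partial order on the finite player set N and let 𝒩 = {N_1, …, N_q} be a nested normal collection of downsets. If v is a convex game on O(N), then the restricted core equals the restricted Weber set: C_𝒩(v) = W_𝒩(v). -/

import Mathlib

open Finset

variable {ι : Type*}

/-- `S` is a downset (lower set) of the poset `ι`. -/
def IsDownset [PartialOrder ι] (S : Finset ι) : Prop :=
  ∀ ⦃i⦄, i ∈ S → ∀ ⦃j⦄, j ≤ i → j ∈ S

/-- A maximal chain `∅ = S_0 ⊊ S_1 ⊊ ⋯ ⊊ S_n = N` in `O(N)` (the collection of downsets),
with `|S_k| = k`, encoded as an increasing `ℕ`-indexed family of downsets with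
`(S k).card = k` for `k ≤ n`. -/
def MaximalChain [Fintype ι] [PartialOrder ι] (S : ℕ → Finset ι) : Prop :=
  (∀ k, IsDownset (S k)) ∧ (∀ k, S k ⊆ S (k + 1)) ∧
    ∀ k ≤ Fintype.card ι, (S k).card = k

/-- The marginal vector `x^C` of the chain `C = (S_k)_k` for the game `v`:
`x^C_i = v(S_k) - v(S_{k-1})` where `k` is the first index with `i ∈ S_k`. -/
noncomputable def marginal (v : Finset ι → ℝ) (S : ℕ → Finset ι) (i : ι) : ℝ :=
  v (S (sInf {k | i ∈ S k})) - v (S (sInf {k | i ∈ S k} - 1))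

/-- The core of a game `v` on `O(N)`. -/
def core [Fintype ι] [PartialOrder ι] (v : Finset ι → ℝ) : Set (ι → ℝ) :=
  {x | (∀ S : Finset ι, IsDownset S → v S ≤ ∑ a ∈ S, x a) ∧ ∑ a, x a = v Finset.univ}

/-- `𝒩` is a collection of downsets, all different from `N`. -/
def DownsetCollection [Fintype ι] [PartialOrder ι] (𝒩 : Finset (Finset ι)) : Prop :=
  ∀ A ∈ 𝒩, IsDownset A ∧ A ≠ Finset.univ

/-- `𝒩` is a normal collection: turning the core inequalities indexed by `𝒩` into
equalities makes the recession cone reduce to `{0}`. -/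
def NormalCollection [Fintype ι] [PartialOrder ι] (𝒩 : Finset (Finset ι)) : Prop :=
  DownsetCollection 𝒩 ∧
    {x : ι → ℝ | (∀ S : Finset ι, IsDownset S → 0 ≤ ∑ a ∈ S, x a) ∧
      (∑ a, x a) = 0 ∧ ∀ A ∈ 𝒩, ∑ a ∈ A, x a = 0} = {0}

/-- `𝒩` is nested: it is a chain under inclusion. -/
def Nested (𝒩 : Finset (Finset ι)) : Prop :=
  ∀ A ∈ 𝒩, ∀ B ∈ 𝒩, A ⊆ B ∨ B ⊆ A

/-- The restricted core `C_𝒩(v)`: elements of the core satisfying `x(A) = v(A)` for `A ∈ 𝒩`. -/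
def restrictedCore [Fintype ι] [PartialOrder ι] (𝒩 : Finset (Finset ι))
    (v : Finset ι → ℝ) : Set (ι → ℝ) :=
  {x ∈ core v | ∀ A ∈ 𝒩, ∑ a ∈ A, x a = v A}

/-- A restricted maximal chain: a maximal chain in `O(N)` passing through every `A ∈ 𝒩`. -/
def RestrictedChain [Fintype ι] [PartialOrder ι] (𝒩 : Finset (Finset ι))
    (S : ℕ → Finset ι) : Prop :=
  MaximalChain S ∧ ∀ A ∈ 𝒩, ∃ k, S k = A

/-- The restricted Weber set `W_𝒩(v)`: the convex hull of the marginal vectors of all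
restricted maximal chains. -/
def restrictedWeber [Fintype ι] [PartialOrder ι] (𝒩 : Finset (Finset ι))
    (v : Finset ι → ℝ) : Set (ι → ℝ) :=
  convexHull ℝ {x | ∃ S : ℕ → Finset ι, RestrictedChain 𝒩 S ∧ x = marginal v S}

set_option linter.unusedSectionVars false
set_option linter.unusedVariables false

section Chain

variable [Fintype ι] [DecidableEq ι] [PartialOrder ι]

lemma IsDownset.inter {S T : Finset ι} (hS : IsDownset S) (hT : IsDownset T) :
    IsDownset (S ∩ T) := fun i hi j hj => by
  simp only [Finset.mem_inter] at hi ⊢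
  exact ⟨hS hi.1 hj, hT hi.2 hj⟩

lemma IsDownset.union {S T : Finset ι} (hS : IsDownset S) (hT : IsDownset T) :
    IsDownset (S ∪ T) := fun i hi j hj => by
  simp only [Finset.mem_union] at hi ⊢
  exact hi.imp (fun h => hS h hj) (fun h => hT h hj)

lemma isDownset_empty : IsDownset (∅ : Finset ι) := fun i hi => by simp at hi

lemma isDownset_univ : IsDownset (Finset.univ : Finset ι) := fun i _ j _ => Finset.mem_univ j

namespace MaximalChain

variable {S : ℕ → Finset ι} (hS : MaximalChain S)
include hS

lemma zero : S 0 = ∅ := Finset.card_eq_zero.1 (hS.2.2 0 (Nat.zero_le _))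

lemma mono : Monotone S := monotone_nat_of_le_succ hS.2.1

lemma top : S (Fintype.card ι) = Finset.univ :=
  Finset.eq_univ_of_card _ (hS.2.2 _ le_rfl)

lemma eq_univ {k : ℕ} (hk : Fintype.card ι ≤ k) : S k = Finset.univ :=
  Finset.Subset.antisymm (Finset.subset_univ _) (hS.top ▸ hS.mono hk)

lemma step {k : ℕ} (hk : k + 1 ≤ Fintype.card ι) :
    ∃ i, i ∉ S k ∧ S (k + 1) = insert i (S k) := by
  have hsub : S k ⊆ S (k + 1) := hS.2.1 k
  have hcard : (S (k + 1) \ S k).card = 1 := by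
    rw [Finset.card_sdiff_of_subset hsub, hS.2.2 _ hk, hS.2.2 _ (le_of_lt (Nat.lt_of_succ_le hk))]
    simp
  obtain ⟨i, hi⟩ := Finset.card_eq_one.1 hcard
  have himem : i ∈ S (k+1) \ S k := hi ▸ Finset.mem_singleton_self i
  refine ⟨i, (Finset.mem_sdiff.1 himem).2, ?_⟩
  have := Finset.union_sdiff_of_subset hsub
  rw [hi] at this
  rw [← this, Finset.union_comm, ← Finset.insert_eq]

/-- The entry time of `i`. -/
noncomputable def entry (_ : MaximalChain S) (i : ι) : ℕ := sInf {k | i ∈ S k}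

lemma entry_nonempty (i : ι) : {k | i ∈ S k}.Nonempty :=
  ⟨Fintype.card ι, by simp [hS.top]⟩

lemma mem_entry (i : ι) : i ∈ S (hS.entry i) := Nat.sInf_mem (hS.entry_nonempty i)

lemma entry_pos (i : ι) : 1 ≤ hS.entry i := by
  rcases Nat.eq_zero_or_pos (hS.entry i) with h | h
  · exfalso
    have := hS.mem_entry i
    rw [h, hS.zero] at this
    simp at this
  · exact h

lemma entry_le (i : ι) : hS.entry i ≤ Fintype.card ι :=
  Nat.sInf_le (by simp [hS.top])

lemma not_mem_entry_pred (i : ι) : i ∉ S (hS.entry i - 1) := by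
  intro h
  have h1 := hS.entry_pos i
  have h2 : hS.entry i ≤ hS.entry i - 1 := Nat.sInf_le h
  omega

lemma entry_le_iff {i : ι} {m : ℕ} : hS.entry i ≤ m ↔ i ∈ S m := by
  constructor
  · intro h; exact hS.mono h (hS.mem_entry i)
  · intro h; exact Nat.sInf_le h

lemma entry_eq {i : ι} {k : ℕ} (h1 : i ∈ S (k+1)) (h2 : i ∉ S k) : hS.entry i = k + 1 := by
  have ha : hS.entry i ≤ k + 1 := hS.entry_le_iff.2 h1
  have hb : ¬ (hS.entry i ≤ k) := fun h => h2 (hS.entry_le_iff.1 h)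
  omega

lemma marginal_eq {v : Finset ι → ℝ} {i : ι} {k : ℕ} (h1 : i ∈ S (k+1)) (h2 : i ∉ S k) :
    marginal v S i = v (S (k+1)) - v (S k) := by
  have := hS.entry_eq h1 h2
  simp only [marginal]
  rw [show sInf {k | i ∈ S k} = hS.entry i from rfl, this]
  simp

lemma sum_marginal (v : Finset ι → ℝ) (hv : v ∅ = 0) {m : ℕ} (hm : m ≤ Fintype.card ι) :
    ∑ a ∈ S m, marginal v S a = v (S m) := by
  induction m with
  | zero => simp [hS.zero, hv]
  | succ k ih =>
    obtain ⟨i, hiS, hins⟩ := hS.step hm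
    rw [hins, Finset.sum_insert hiS, ih (by omega),
      hS.marginal_eq (by rw [hins]; exact Finset.mem_insert_self i _) hiS, hins]
    ring

end MaximalChain

end Chain
section Core

variable [Fintype ι] [DecidableEq ι] [PartialOrder ι]
variable {v : Finset ι → ℝ}

lemma MaximalChain.marginal_core_ineq {S : ℕ → Finset ι} (hS : MaximalChain S)
    (hv : v ∅ = 0)
    (hconv : ∀ S T : Finset ι, IsDownset S → IsDownset T →
      v S + v T ≤ v (S ∪ T) + v (S ∩ T))
    {T : Finset ι} (hT : IsDownset T) :
    v T ≤ ∑ a ∈ T, marginal v S a := by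
  have key : ∀ k ≤ Fintype.card ι, v (T ∩ S k) ≤ ∑ a ∈ T ∩ S k, marginal v S a := by
    intro k hk
    induction k with
    | zero => simp [hS.zero, hv]
    | succ m ih =>
      obtain ⟨i, hiS, hins⟩ := hS.step hk
      by_cases hiT : i ∈ T
      · have hTm : T ∩ S (m+1) = insert i (T ∩ S m) := by
          rw [hins]
          ext a
          simp only [Finset.mem_inter, Finset.mem_insert]
          constructor
          · rintro ⟨h1, h2 | h2⟩
            · exact Or.inl h2
            · exact Or.inr ⟨h1, h2⟩
          · rintro (h | ⟨h1, h2⟩)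
            · exact ⟨h ▸ hiT, Or.inl h⟩
            · exact ⟨h1, Or.inr h2⟩
        have hiTS : i ∉ T ∩ S m := fun h => hiS (Finset.mem_inter.1 h).2
        have hunion : (T ∩ S (m+1)) ∪ S m = S (m+1) := by
          rw [hTm, hins]
          apply Finset.Subset.antisymm
          · intro a ha
            rcases Finset.mem_union.1 ha with h | h
            · rcases Finset.mem_insert.1 h with h | h
              · simp [h]
              · exact Finset.mem_insert_of_mem (Finset.mem_inter.1 h).2
            · exact Finset.mem_insert_of_mem h
          · intro a ha
            rcases Finset.mem_insert.1 ha with h | h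
            · exact Finset.mem_union_left _ (by simp [h, hiT])
            · exact Finset.mem_union_right _ h
        have hinter : (T ∩ S (m+1)) ∩ S m = T ∩ S m := by
          rw [hTm]
          ext a
          simp only [Finset.mem_inter, Finset.mem_insert]
          constructor
          · rintro ⟨h1 | h1, h2⟩
            · exact absurd (h1 ▸ h2) hiS
            · exact ⟨h1.1, h2⟩
          · rintro ⟨h1, h2⟩
            exact ⟨Or.inr ⟨h1, h2⟩, h2⟩
        have hdown : IsDownset (T ∩ S (m+1)) := hT.inter (hS.1 _)
        have := hconv _ _ hdown (hS.1 m)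
        rw [hunion, hinter] at this
        have hmarg : marginal v S i = v (S (m+1)) - v (S m) :=
          hS.marginal_eq (by rw [hins]; exact Finset.mem_insert_self i _) hiS
        have ihm := ih (by omega)
        rw [hTm] at this
        rw [hTm, Finset.sum_insert hiTS, hmarg]
        linarith
      · have hTm : T ∩ S (m+1) = T ∩ S m := by
          rw [hins]
          ext a
          simp only [Finset.mem_inter, Finset.mem_insert]
          constructor
          · rintro ⟨h1, h2 | h2⟩
            · exact absurd (h2 ▸ h1) hiT
            · exact ⟨h1, h2⟩
          · rintro ⟨h1, h2⟩
            exact ⟨h1, Or.inr h2⟩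
        rw [hTm]
        exact ih (by omega)
  have := key (Fintype.card ι) le_rfl
  rwa [hS.top, Finset.inter_univ] at this

lemma RestrictedChain.marginal_mem_restrictedCore {𝒩 : Finset (Finset ι)}
    {S : ℕ → Finset ι} (hS : RestrictedChain 𝒩 S) (hv : v ∅ = 0)
    (hconv : ∀ S T : Finset ι, IsDownset S → IsDownset T →
      v S + v T ≤ v (S ∪ T) + v (S ∩ T)) :
    marginal v S ∈ restrictedCore 𝒩 v := by
  obtain ⟨hM, hpass⟩ := hS
  refine ⟨⟨fun T hT => hM.marginal_core_ineq hv hconv hT, ?_⟩, ?_⟩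
  · have := hM.sum_marginal v hv (le_refl (Fintype.card ι))
    rw [hM.top] at this
    exact this
  · intro A hA
    obtain ⟨k, hk⟩ := hpass A hA
    rcases le_or_gt k (Fintype.card ι) with hkle | hkgt
    · rw [← hk]; exact hM.sum_marginal v hv hkle
    · have hA' : A = Finset.univ := by rw [← hk]; exact hM.eq_univ hkgt.le
      rw [hA']
      have := hM.sum_marginal v hv (le_refl (Fintype.card ι))
      rw [hM.top] at this
      exact this

end Core
section Topology

variable [Fintype ι] [DecidableEq ι] [PartialOrder ι]
variable {v : Finset ι → ℝ} {𝒩 : Finset (Finset ι)}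

lemma continuous_setSum (S : Finset ι) : Continuous fun x : ι → ℝ => ∑ a ∈ S, x a :=
  continuous_finset_sum _ fun a _ => continuous_apply a

lemma convex_restrictedCore : Convex ℝ (restrictedCore 𝒩 v) := by
  intro x hx y hy a b ha hb hab
  obtain ⟨⟨hx1, hx2⟩, hx3⟩ := hx
  obtain ⟨⟨hy1, hy2⟩, hy3⟩ := hy
  have hsum : ∀ S : Finset ι, ∑ c ∈ S, (a • x + b • y) c =
      a * ∑ c ∈ S, x c + b * ∑ c ∈ S, y c := by
    intro S
    simp only [Pi.add_apply, Pi.smul_apply, smul_eq_mul]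
    rw [Finset.sum_add_distrib, Finset.mul_sum, Finset.mul_sum]
  have habv : ∀ c : ℝ, a * c + b * c = c := fun c => by
    rw [← add_mul, hab, one_mul]
  refine ⟨⟨fun S hS => ?_, ?_⟩, fun A hA => ?_⟩
  · rw [hsum S]
    have h1 := mul_le_mul_of_nonneg_left (hx1 S hS) ha
    have h2 := mul_le_mul_of_nonneg_left (hy1 S hS) hb
    have := habv (v S)
    linarith
  · rw [hsum Finset.univ, hx2, hy2, habv]
  · rw [hsum A, hx3 A hA, hy3 A hA, habv]

lemma isClosed_restrictedCore : IsClosed (restrictedCore 𝒩 v) := by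
  have h1 : restrictedCore 𝒩 v =
      (⋂ S : Finset ι, {x : ι → ℝ | IsDownset S → v S ≤ ∑ a ∈ S, x a}) ∩
        ({x : ι → ℝ | ∑ a, x a = v Finset.univ} ∩
          ⋂ A ∈ 𝒩, {x : ι → ℝ | ∑ a ∈ A, x a = v A}) := by
    ext x
    simp only [restrictedCore, core, Set.mem_inter_iff, Set.mem_iInter, Set.mem_setOf_eq,
      Set.mem_sep_iff]
    tauto
  rw [h1]
  refine IsClosed.inter (isClosed_iInter fun S => ?_)
    (IsClosed.inter (isClosed_eq (continuous_setSum _) continuous_const)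
      (isClosed_biInter fun A _ => isClosed_eq (continuous_setSum _) continuous_const))
  by_cases h : IsDownset S
  · simp only [h, forall_true_left]
    exact isClosed_le continuous_const (continuous_setSum _)
  · simp only [h]
    simp

lemma bounded_restrictedCore (hnormal : NormalCollection 𝒩) :
    Bornology.IsBounded (restrictedCore 𝒩 v) := by
  by_contra hb
  rw [isBounded_iff_forall_norm_le] at hb
  push_neg at hb
  have hex : ∀ m : ℕ, ∃ x, x ∈ restrictedCore 𝒩 v ∧ ((m : ℝ) + 1) < ‖x‖ := by
    intro m
    obtain ⟨x, hx, h⟩ := hb ((m : ℝ) + 1)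
    exact ⟨x, hx, h⟩
  choose x hxC hxn using hex
  have hxpos : ∀ m : ℕ, (0 : ℝ) < ‖x m‖ := fun m =>
    lt_of_le_of_lt (by positivity) (hxn m)
  set u : ℕ → (ι → ℝ) := fun m => ‖x m‖⁻¹ • x m with hu_def
  have hu : ∀ m, u m ∈ Metric.sphere (0 : ι → ℝ) 1 := by
    intro m
    rw [mem_sphere_zero_iff_norm, hu_def]
    simp only [norm_smul, norm_inv, norm_norm]
    exact inv_mul_cancel₀ (ne_of_gt (hxpos m))
  obtain ⟨d, hd, φ, hφ, hdconv⟩ := (isCompact_sphere (0 : ι → ℝ) 1).tendsto_subseq hu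
  have hsum_u : ∀ (m : ℕ) (S : Finset ι), ∑ a ∈ S, u m a = ‖x m‖⁻¹ * ∑ a ∈ S, x m a := by
    intro m S
    simp only [hu_def, Pi.smul_apply, smul_eq_mul, Finset.mul_sum]
  have hinvtend : Filter.Tendsto (fun j => ‖x (φ j)‖⁻¹) Filter.atTop (nhds 0) := by
    apply squeeze_zero (fun j => by positivity) (g := fun j : ℕ => 1 / ((j : ℝ) + 1))
    · intro j
      rw [one_div]
      apply inv_anti₀ (by positivity)
      calc ((j : ℝ) + 1) ≤ (φ j : ℝ) + 1 := by
            have := hφ.id_le j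
            have : (j : ℝ) ≤ (φ j : ℝ) := by exact_mod_cast this
            linarith
        _ ≤ ‖x (φ j)‖ := (hxn (φ j)).le
    · exact tendsto_one_div_add_atTop_nhds_zero_nat
  have hsumtend : ∀ S : Finset ι,
      Filter.Tendsto (fun j => ∑ a ∈ S, (u (φ j)) a) Filter.atTop (nhds (∑ a ∈ S, d a)) :=
    fun S => ((continuous_setSum S).tendsto d).comp hdconv
  have hd_ineq : ∀ S : Finset ι, IsDownset S → 0 ≤ ∑ a ∈ S, d a := by
    intro S hS
    have hzero : Filter.Tendsto (fun j => ‖x (φ j)‖⁻¹ * v S) Filter.atTop (nhds 0) := by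
      have := hinvtend.mul_const (v S)
      rwa [zero_mul] at this
    refine le_of_tendsto_of_tendsto' hzero (hsumtend S) fun j => ?_
    rw [hsum_u]
    exact mul_le_mul_of_nonneg_left ((hxC (φ j)).1.1 S hS) (by positivity)
  have key_eq : ∀ S : Finset ι, (∀ m, ∑ a ∈ S, x m a = v S) → ∑ a ∈ S, d a = 0 := by
    intro S hSx
    have hzero : Filter.Tendsto (fun j => ‖x (φ j)‖⁻¹ * v S) Filter.atTop (nhds 0) := by
      have := hinvtend.mul_const (v S)
      rwa [zero_mul] at this
    have heq : (fun j => ∑ a ∈ S, (u (φ j)) a) = fun j => ‖x (φ j)‖⁻¹ * v S := by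
      funext j
      rw [hsum_u, hSx]
    have := hsumtend S
    rw [heq] at this
    exact tendsto_nhds_unique this hzero
  have hduniv : ∑ a, d a = 0 := by
    apply key_eq Finset.univ
    intro m
    exact (hxC m).1.2
  have hdN : ∀ A ∈ 𝒩, ∑ a ∈ A, d a = 0 := by
    intro A hA
    apply key_eq A
    intro m
    exact (hxC m).2 A hA
  have hdmem : d ∈ ({x : ι → ℝ | (∀ S : Finset ι, IsDownset S → 0 ≤ ∑ a ∈ S, x a) ∧
      (∑ a, x a) = 0 ∧ ∀ A ∈ 𝒩, ∑ a ∈ A, x a = 0}) := ⟨hd_ineq, hduniv, hdN⟩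
  rw [hnormal.2] at hdmem
  have : d = 0 := hdmem
  rw [this] at hd
  simp at hd

end Topology
section Tight

variable [Fintype ι] [DecidableEq ι] [PartialOrder ι]

/-- The family of tight downsets at `x`. -/
def tightSets [Fintype ι] (v : Finset ι → ℝ) (x : ι → ℝ) : Set (Finset ι) :=
  {S | IsDownset S ∧ ∑ a ∈ S, x a = v S}

variable {v : Finset ι → ℝ} {𝒩 : Finset (Finset ι)} {x : ι → ℝ}

lemma tight_univ (hx : x ∈ restrictedCore 𝒩 v) : Finset.univ ∈ tightSets v x :=
  ⟨isDownset_univ, hx.1.2⟩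

lemma tight_empty (hv : v ∅ = 0) : (∅ : Finset ι) ∈ tightSets v x :=
  ⟨isDownset_empty, by simp [hv]⟩

lemma tight_of_mem_N (hnormal : NormalCollection 𝒩) (hx : x ∈ restrictedCore 𝒩 v)
    {A : Finset ι} (hA : A ∈ 𝒩) : A ∈ tightSets v x :=
  ⟨(hnormal.1 A hA).1, hx.2 A hA⟩

lemma tight_union_inter (hx : x ∈ restrictedCore 𝒩 v)
    (hconv : ∀ S T : Finset ι, IsDownset S → IsDownset T →
      v S + v T ≤ v (S ∪ T) + v (S ∩ T))
    {S T : Finset ι} (hS : S ∈ tightSets v x) (hT : T ∈ tightSets v x) :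
    S ∪ T ∈ tightSets v x ∧ S ∩ T ∈ tightSets v x := by
  obtain ⟨hSd, hSe⟩ := hS
  obtain ⟨hTd, hTe⟩ := hT
  have hU : IsDownset (S ∪ T) := hSd.union hTd
  have hI : IsDownset (S ∩ T) := hSd.inter hTd
  have h1 : v (S ∪ T) ≤ ∑ a ∈ S ∪ T, x a := hx.1.1 _ hU
  have h2 : v (S ∩ T) ≤ ∑ a ∈ S ∩ T, x a := hx.1.1 _ hI
  have h3 : v S + v T ≤ v (S ∪ T) + v (S ∩ T) := hconv S T hSd hTd
  have h4 : (∑ a ∈ S ∪ T, x a) + ∑ a ∈ S ∩ T, x a = (∑ a ∈ S, x a) + ∑ a ∈ T, x a :=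
    Finset.sum_union_inter
  exact ⟨⟨hU, by linarith⟩, ⟨hI, by linarith⟩⟩

/-- If `x` is an extreme point, the tight-set equalities pin down directions completely. -/
lemma span_tight (hnormal : NormalCollection 𝒩)
    (hx : x ∈ Set.extremePoints ℝ (restrictedCore 𝒩 v))
    (y : ι → ℝ) (hy : ∀ S ∈ tightSets v x, ∑ a ∈ S, y a = 0) : y = 0 := by
  classical
  by_contra hy0
  have hxC : x ∈ restrictedCore 𝒩 v := hx.1
  set F : Finset (Finset ι) :=
    Finset.univ.filter (fun S => IsDownset S ∧ ¬ (∑ a ∈ S, x a = v S)) with hF_def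
  have hgap : ∀ S ∈ F, 0 < (∑ a ∈ S, x a) - v S := by
    intro S hS
    rw [hF_def, Finset.mem_filter] at hS
    have := hxC.1.1 S hS.2.1
    rcases lt_or_eq_of_le this with h | h
    · linarith
    · exact absurd h.symm hS.2.2
  set g : Finset ι → ℝ := fun S => ((∑ a ∈ S, x a) - v S) / (|∑ a ∈ S, y a| + 1) with hg_def
  have hgpos : ∀ S ∈ F, 0 < g S := fun S hS => div_pos (hgap S hS) (by positivity)
  set ε : ℝ := if hF : F.Nonempty then F.inf' hF g else 1 with hε_def
  have hεpos : 0 < ε := by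
    rw [hε_def]
    split_ifs with hF
    · rw [Finset.lt_inf'_iff]
      exact fun S hS => hgpos S hS
    · norm_num
  have hεkey : ∀ S ∈ F, ε * |∑ a ∈ S, y a| < (∑ a ∈ S, x a) - v S := by
    intro S hS
    have h1 : ε ≤ g S := by
      rw [hε_def]
      split_ifs with hF
      · exact Finset.inf'_le g hS
      · exact absurd ⟨S, hS⟩ hF
    have h2 : (|∑ a ∈ S, y a| + 1) > 0 := by positivity
    have h3 : ε * (|∑ a ∈ S, y a| + 1) ≤ (∑ a ∈ S, x a) - v S := by
      rw [hg_def] at h1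
      calc ε * (|∑ a ∈ S, y a| + 1) ≤ g S * (|∑ a ∈ S, y a| + 1) := by
            apply mul_le_mul_of_nonneg_right h1 (by positivity)
        _ = (∑ a ∈ S, x a) - v S := by
            rw [hg_def]; field_simp
    nlinarith [abs_nonneg (∑ a ∈ S, y a)]
  -- membership of the two perturbations
  have hmem : ∀ c : ℝ, |c| ≤ ε → x + c • y ∈ restrictedCore 𝒩 v := by
    intro c hc
    have hsum : ∀ S : Finset ι, ∑ a ∈ S, (x + c • y) a =
        (∑ a ∈ S, x a) + c * ∑ a ∈ S, y a := by
      intro S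
      simp only [Pi.add_apply, Pi.smul_apply, smul_eq_mul]
      rw [Finset.sum_add_distrib, Finset.mul_sum]
    refine ⟨⟨fun S hS => ?_, ?_⟩, fun A hA => ?_⟩
    · by_cases ht : ∑ a ∈ S, x a = v S
      · rw [hsum, hy S ⟨hS, ht⟩, ht]; ring_nf; exact le_refl _
      · have hSF : S ∈ F := by
          rw [hF_def, Finset.mem_filter]
          exact ⟨Finset.mem_univ S, hS, ht⟩
        have := hεkey S hSF
        have habs : |c * ∑ a ∈ S, y a| ≤ ε * |∑ a ∈ S, y a| := by
          rw [abs_mul]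
          exact mul_le_mul_of_nonneg_right hc (abs_nonneg _)
        have := abs_le.1 habs
        rw [hsum]
        have h5 := hεkey S hSF
        linarith [this.1]
    · rw [show ∑ a, (x + c • y) a = ∑ a ∈ Finset.univ, (x + c • y) a from rfl, hsum,
        hy Finset.univ (tight_univ hxC), hxC.1.2]
      ring
    · rw [hsum, hy A (tight_of_mem_N hnormal hxC hA), hxC.2 A hA]
      ring
  have hz1 : x + ε • y ∈ restrictedCore 𝒩 v := hmem ε (le_of_eq (abs_of_pos hεpos))
  have hz2 : x + (-ε) • y ∈ restrictedCore 𝒩 v := by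
    apply hmem (-ε)
    rw [abs_neg, abs_of_pos hεpos]
  have hseg : x ∈ openSegment ℝ (x + ε • y) (x + (-ε) • y) := by
    refine ⟨1/2, 1/2, by norm_num, by norm_num, by norm_num, ?_⟩
    funext i
    simp only [Pi.add_apply, Pi.smul_apply, smul_eq_mul]
    ring
  have heq := (hx.2 hz1 hz2 hseg)
  have hzero : ε • y = 0 := add_eq_left.1 heq
  rcases smul_eq_zero.1 hzero with h | h
  · exact absurd h (ne_of_gt hεpos)
  · exact hy0 h

end Tight
section Step

set_option maxHeartbeats 1000000

variable [Fintype ι] [DecidableEq ι] [PartialOrder ι]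
variable {v : Finset ι → ℝ} {𝒩 : Finset (Finset ι)} {x : ι → ℝ}

lemma mem_inf_finsets {G : Finset (Finset ι)} {a : ι} :
    a ∈ G.inf id ↔ ∀ S ∈ G, a ∈ S := by
  classical
  induction G using Finset.induction_on with
  | empty => simp [Finset.inf_empty, Finset.top_eq_univ]
  | @insert A G hA ih =>
    rw [Finset.inf_insert]
    simp only [id_eq, Finset.inf_eq_inter, Finset.mem_inter, ih, Finset.forall_mem_insert]

lemma subset_inf_finsets {G : Finset (Finset ι)} {T : Finset ι}
    (h : ∀ S ∈ G, T ⊆ S) : T ⊆ G.inf id := fun a ha =>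
  mem_inf_finsets.2 fun S hS => h S hS ha

lemma tight_inf (hx : x ∈ restrictedCore 𝒩 v)
    (hconv : ∀ S T : Finset ι, IsDownset S → IsDownset T →
      v S + v T ≤ v (S ∪ T) + v (S ∩ T))
    {G : Finset (Finset ι)} (hG : ∀ S ∈ G, S ∈ tightSets v x) :
    G.inf id ∈ tightSets v x := by
  classical
  induction G using Finset.induction_on with
  | empty =>
    rw [Finset.inf_empty]
    rw [Finset.top_eq_univ]
    exact tight_univ hx
  | @insert A G hA ih =>
    rw [Finset.inf_insert]
    have h1 : A ∈ tightSets v x := hG A (Finset.mem_insert_self A G)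
    have h2 : G.inf id ∈ tightSets v x := ih fun S hS => hG S (Finset.mem_insert_of_mem hS)
    rw [id_eq, Finset.inf_eq_inter]
    exact (tight_union_inter hx hconv h1 h2).2

lemma nested_inf_mem {G : Finset (Finset ι)} (hG : G.Nonempty)
    (hch : ∀ A ∈ G, ∀ B ∈ G, A ⊆ B ∨ B ⊆ A) : G.inf id ∈ G := by
  classical
  induction G using Finset.induction_on with
  | empty => exact absurd hG (by simp)
  | @insert A G hA ih =>
    rw [Finset.inf_insert, id_eq, Finset.inf_eq_inter]
    rcases G.eq_empty_or_nonempty with rfl | hGne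
    · simp [Finset.inf_empty, Finset.top_eq_univ]
    · have hch' : ∀ A' ∈ G, ∀ B ∈ G, A' ⊆ B ∨ B ⊆ A' := fun A' hA' B hB =>
        hch A' (Finset.mem_insert_of_mem hA') B (Finset.mem_insert_of_mem hB)
      have hBmem : G.inf id ∈ G := ih hGne hch'
      rcases hch A (Finset.mem_insert_self A G) (G.inf id) (Finset.mem_insert_of_mem hBmem)
        with h | h
      · rw [Finset.inter_eq_left.2 h]
        exact Finset.mem_insert_self A G
      · rw [Finset.inter_eq_right.2 h]
        exact Finset.mem_insert_of_mem hBmem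

open Classical in
/-- The smallest tight set containing `j`. -/
noncomputable def Dset (v : Finset ι → ℝ) (x : ι → ℝ) (j : ι) : Finset ι :=
  ((Finset.univ : Finset (Finset ι)).filter fun S => S ∈ tightSets v x ∧ j ∈ S).inf id

lemma mem_Dset {j a : ι} : a ∈ Dset v x j ↔ ∀ S ∈ tightSets v x, j ∈ S → a ∈ S := by
  classical
  rw [Dset, mem_inf_finsets]
  constructor
  · intro h S hS hj
    exact h S (by simp only [Finset.mem_filter]; exact ⟨Finset.mem_univ _, hS, hj⟩)
  · intro h S hS
    rw [Finset.mem_filter] at hS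
    exact h S hS.2.1 hS.2.2

lemma self_mem_Dset {j : ι} : j ∈ Dset v x j := mem_Dset.2 fun _ _ hj => hj

lemma Dset_tight (hx : x ∈ restrictedCore 𝒩 v)
    (hconv : ∀ S T : Finset ι, IsDownset S → IsDownset T →
      v S + v T ≤ v (S ∪ T) + v (S ∩ T)) (j : ι) :
    Dset v x j ∈ tightSets v x := by
  classical
  apply tight_inf hx hconv
  intro S hS
  rw [Finset.mem_filter] at hS
  exact hS.2.1

lemma Dset_subset {j j' : ι} (h : j' ∈ Dset v x j) : Dset v x j' ⊆ Dset v x j := by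
  intro a ha
  rw [mem_Dset] at ha h ⊢
  exact fun S hS hj => ha S hS (h S hS hj)

/-- Key step: a tight set `T ≠ univ` compatible with `𝒩` has a one-element tight
extension still compatible with `𝒩`. -/
lemma exists_step (hnormal : NormalCollection 𝒩)
    (hx : x ∈ restrictedCore 𝒩 v)
    (hconv : ∀ S T : Finset ι, IsDownset S → IsDownset T →
      v S + v T ≤ v (S ∪ T) + v (S ∩ T))
    (hnested : Nested 𝒩)
    (hspan : ∀ y : ι → ℝ, (∀ S ∈ tightSets v x, ∑ a ∈ S, y a = 0) → y = 0)
    {T : Finset ι} (hT : T ∈ tightSets v x) (hTne : T ≠ Finset.univ)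
    (hTcomp : ∀ A ∈ 𝒩, A ⊆ T ∨ T ⊆ A) :
    ∃ T', T' ∈ tightSets v x ∧ T ⊆ T' ∧ T'.card = T.card + 1 ∧
      ∀ A ∈ 𝒩, A ⊆ T ∨ T' ⊆ A := by
  classical
  set GB : Finset (Finset ι) := 𝒩.filter (fun A => ¬ A ⊆ T) with hGB_def
  set B : Finset ι := GB.inf id with hB_def
  have hGBmem : ∀ A ∈ GB, A ∈ 𝒩 ∧ ¬ A ⊆ T := by
    intro A hA
    rw [hGB_def, Finset.mem_filter] at hA
    exact ⟨hA.1, hA.2⟩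
  have hBtight : B ∈ tightSets v x :=
    tight_inf hx hconv fun A hA => tight_of_mem_N hnormal hx (hGBmem A hA).1
  have hTB : T ⊆ B := subset_inf_finsets fun A hA =>
    (hTcomp A (hGBmem A hA).1).resolve_left (hGBmem A hA).2
  have hTBne : T ≠ B := by
    rcases GB.eq_empty_or_nonempty with hGBe | hGBne
    · rw [hB_def, hGBe, Finset.inf_empty, Finset.top_eq_univ]
      exact hTne
    · have hBmem : B ∈ GB := nested_inf_mem hGBne fun A hA B' hB' =>
        hnested A (hGBmem A hA).1 B' (hGBmem B' hB').1
      intro h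
      exact (hGBmem B hBmem).2 (h ▸ Finset.Subset.refl T)
  have hBTne : (B \ T).Nonempty := by
    rw [Finset.sdiff_nonempty]
    intro h
    exact hTBne (Finset.Subset.antisymm hTB h)
  obtain ⟨j, hjBT, hjmin⟩ := Finset.exists_min_image (B \ T)
    (fun j => ((Dset v x j ∩ B) ∪ T).card) hBTne
  set T' : Finset ι := (Dset v x j ∩ B) ∪ T with hT'_def
  have hjB : j ∈ B := (Finset.mem_sdiff.1 hjBT).1
  have hjT : j ∉ T := (Finset.mem_sdiff.1 hjBT).2
  have hT'tight : T' ∈ tightSets v x :=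
    (tight_union_inter hx hconv
      (tight_union_inter hx hconv (Dset_tight hx hconv j) hBtight).2 hT).1
  have hTT' : T ⊆ T' := Finset.subset_union_right
  have hT'B : T' ⊆ B :=
    Finset.union_subset (Finset.inter_subset_right) hTB
  have hjT' : j ∈ T' :=
    Finset.mem_union_left _ (Finset.mem_inter.2 ⟨self_mem_Dset, hjB⟩)
  have hT'ins : T' = insert j T := by
    apply Finset.Subset.antisymm
    · intro j' hj'
      rw [Finset.mem_insert]
      by_contra hcon
      push_neg at hcon
      obtain ⟨hj'j, hj'T⟩ := hcon
      have hj'DB : j' ∈ Dset v x j ∩ B := by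
        rcases Finset.mem_union.1 hj' with h | h
        · exact h
        · exact absurd h hj'T
      have hj'D : j' ∈ Dset v x j := (Finset.mem_inter.1 hj'DB).1
      have hj'B : j' ∈ B := (Finset.mem_inter.1 hj'DB).2
      have hDsub : Dset v x j' ⊆ Dset v x j := Dset_subset hj'D
      have hEsub : (Dset v x j' ∩ B) ∪ T ⊆ T' := by
        intro a ha
        rcases Finset.mem_union.1 ha with h | h
        · exact Finset.mem_union_left _
            (Finset.mem_inter.2 ⟨hDsub (Finset.mem_inter.1 h).1, (Finset.mem_inter.1 h).2⟩)
        · exact Finset.mem_union_right _ h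
      have hj'cand : j' ∈ B \ T := Finset.mem_sdiff.2 ⟨hj'B, hj'T⟩
      have hcardle := hjmin j' hj'cand
      have hEeq : (Dset v x j' ∩ B) ∪ T = T' :=
        Finset.eq_of_subset_of_card_le hEsub hcardle
      have hjE : j ∈ (Dset v x j' ∩ B) ∪ T := hEeq ▸ hjT'
      have hjD' : j ∈ Dset v x j' := by
        rcases Finset.mem_union.1 hjE with h | h
        · exact (Finset.mem_inter.1 h).1
        · exact absurd h hjT
      -- mutual membership: contradiction with spanning
      set y : ι → ℝ := fun a => (if a = j then (1:ℝ) else 0) - (if a = j' then 1 else 0)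
        with hy_def
      have hy : ∀ S ∈ tightSets v x, ∑ a ∈ S, y a = 0 := by
        intro S hS
        have hsum : ∑ a ∈ S, y a =
            (if j ∈ S then (1:ℝ) else 0) - (if j' ∈ S then 1 else 0) := by
          rw [hy_def]
          rw [Finset.sum_sub_distrib]
          congr 1
          · rw [Finset.sum_ite_eq' S j (fun _ => (1:ℝ))]
          · rw [Finset.sum_ite_eq' S j' (fun _ => (1:ℝ))]
        have hiff : j ∈ S ↔ j' ∈ S := by
          constructor
          · intro h
            exact mem_Dset.1 hj'D S hS h
          · intro h
            exact mem_Dset.1 hjD' S hS h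
        rw [hsum]
        by_cases h : j ∈ S
        · simp [h, hiff.1 h]
        · have h' : j' ∉ S := fun hc => h (hiff.2 hc)
          simp [h, h']
      have hy0 := hspan y hy
      have hyj : y j = 0 := by rw [hy0]; rfl
      have hne : j ≠ j' := fun hc => hj'j hc.symm
      simp [hy_def, hne] at hyj
    · intro a ha
      rcases Finset.mem_insert.1 ha with h | h
      · exact h ▸ hjT'
      · exact hTT' h
  refine ⟨T', hT'tight, hTT', ?_, ?_⟩
  · rw [hT'ins, Finset.card_insert_of_notMem hjT]
  · intro A hA
    by_cases h : A ⊆ T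
    · exact Or.inl h
    · right
      have hAGB : A ∈ GB := by
        rw [hGB_def, Finset.mem_filter]
        exact ⟨hA, h⟩
      have hBA : B ⊆ A := by
        have := Finset.inf_le (f := id) hAGB
        exact this
      exact hT'B.trans hBA

end Step
section Build

variable [Fintype ι] [DecidableEq ι] [PartialOrder ι]

open Classical in
/-- Greedy construction of a tight restricted maximal chain through the tight sets of `x`. -/
noncomputable def chainOf (v : Finset ι → ℝ) (𝒩 : Finset (Finset ι)) (x : ι → ℝ) :
    ℕ → Finset ι :=
  fun k => Nat.rec (∅ : Finset ι)
    (fun _ T => if h : ∃ T', T' ∈ tightSets v x ∧ T ⊆ T' ∧ T'.card = T.card + 1 ∧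
        ∀ A ∈ 𝒩, A ⊆ T ∨ T' ⊆ A then h.choose else Finset.univ) k

variable {v : Finset ι → ℝ} {𝒩 : Finset (Finset ι)} {x : ι → ℝ}

lemma chainOf_zero : chainOf v 𝒩 x 0 = ∅ := rfl

open Classical in
lemma chainOf_succ (k : ℕ) : chainOf v 𝒩 x (k + 1) =
    if h : ∃ T', T' ∈ tightSets v x ∧ chainOf v 𝒩 x k ⊆ T' ∧
        T'.card = (chainOf v 𝒩 x k).card + 1 ∧
        ∀ A ∈ 𝒩, A ⊆ chainOf v 𝒩 x k ∨ T' ⊆ A then h.choose else Finset.univ := rfl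

open Classical in
lemma chainOf_succ_of_ex {k : ℕ}
    (hex : ∃ T', T' ∈ tightSets v x ∧ chainOf v 𝒩 x k ⊆ T' ∧
        T'.card = (chainOf v 𝒩 x k).card + 1 ∧
        ∀ A ∈ 𝒩, A ⊆ chainOf v 𝒩 x k ∨ T' ⊆ A) :
    chainOf v 𝒩 x (k + 1) = hex.choose := by
  rw [chainOf_succ]
  exact dif_pos hex

open Classical in
lemma chainOf_succ_of_nex {k : ℕ}
    (hnex : ¬ ∃ T', T' ∈ tightSets v x ∧ chainOf v 𝒩 x k ⊆ T' ∧
        T'.card = (chainOf v 𝒩 x k).card + 1 ∧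
        ∀ A ∈ 𝒩, A ⊆ chainOf v 𝒩 x k ∨ T' ⊆ A) :
    chainOf v 𝒩 x (k + 1) = Finset.univ := by
  rw [chainOf_succ]
  exact dif_neg hnex

lemma extreme_is_marginal (hnormal : NormalCollection 𝒩) (hnested : Nested 𝒩)
    (hv : v ∅ = 0)
    (hconv : ∀ S T : Finset ι, IsDownset S → IsDownset T →
      v S + v T ≤ v (S ∪ T) + v (S ∩ T))
    (hx : x ∈ Set.extremePoints ℝ (restrictedCore 𝒩 v)) :
    ∃ S : ℕ → Finset ι, RestrictedChain 𝒩 S ∧ x = marginal v S := by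
  classical
  have hxC : x ∈ restrictedCore 𝒩 v := hx.1
  have hspan := span_tight hnormal hx
  set n := Fintype.card ι with hn_def
  -- main invariant
  have hinv : ∀ k ≤ n, chainOf v 𝒩 x k ∈ tightSets v x ∧ (chainOf v 𝒩 x k).card = k ∧
      (∀ A ∈ 𝒩, A ⊆ chainOf v 𝒩 x k ∨ chainOf v 𝒩 x k ⊆ A) ∧
      (∀ A ∈ 𝒩, A ⊆ chainOf v 𝒩 x k → chainOf v 𝒩 x A.card = A) := by
    intro k
    induction k with
    | zero =>
      intro _
      refine ⟨?_, ?_, ?_, ?_⟩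
      · rw [chainOf_zero]; exact tight_empty hv
      · rw [chainOf_zero]; simp
      · intro A _
        right
        rw [chainOf_zero]
        exact Finset.empty_subset A
      · intro A hA hsub
        rw [chainOf_zero] at hsub
        have hA0 : A = ∅ := Finset.subset_empty.1 hsub
        rw [hA0, Finset.card_empty]
        exact chainOf_zero
    | succ k ih =>
      intro hk1
      obtain ⟨htight, hcard, hcomp, hpass⟩ := ih (by omega)
      have hne : chainOf v 𝒩 x k ≠ Finset.univ := by
        intro h
        rw [h, Finset.card_univ] at hcard
        omega
      have hex : ∃ T', T' ∈ tightSets v x ∧ chainOf v 𝒩 x k ⊆ T' ∧ T'.card = (chainOf v 𝒩 x k).card + 1 ∧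
          ∀ A ∈ 𝒩, A ⊆ chainOf v 𝒩 x k ∨ T' ⊆ A :=
        exists_step hnormal hxC hconv hnested hspan htight hne hcomp
      have hsucc : chainOf v 𝒩 x (k+1) = hex.choose := chainOf_succ_of_ex hex
      obtain ⟨ht', hs', hc', hco'⟩ := hex.choose_spec
      rw [← hsucc] at ht' hs' hc' hco'
      refine ⟨ht', by omega, ?_, ?_⟩
      · intro A hA
        rcases hco' A hA with h | h
        · exact Or.inl (h.trans hs')
        · exact Or.inr h
      · intro A hA hsub
        rcases hco' A hA with h | h
        · exact hpass A hA h
        · have hAeq : A = chainOf v 𝒩 x (k+1) := Finset.Subset.antisymm hsub h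
          have hAcard : A.card = k + 1 := by rw [hAeq, hc', hcard]
          rw [hAcard]
          exact hAeq.symm
  -- beyond n everything is univ
  have htop : chainOf v 𝒩 x n = Finset.univ := Finset.eq_univ_of_card _ ((hinv n le_rfl).2.1)
  have huniv : ∀ k, n ≤ k → chainOf v 𝒩 x k = Finset.univ := by
    intro k hk
    induction k with
    | zero =>
      have h0 : n = 0 := by omega
      rw [← h0]
      exact htop
    | succ m ihm =>
      rcases Nat.lt_or_ge m n with h | h
      · have : n = m + 1 := by omega
        rw [← this]; exact htop
      · have hm := ihm h
        apply chainOf_succ_of_nex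
        rintro ⟨T', _, _, hcT', _⟩
        have h1 : T'.card ≤ n := by
          rw [hn_def]
          exact Finset.card_le_univ T'
        rw [hm, Finset.card_univ, ← hn_def] at hcT'
        omega
  -- monotone and downsets
  have hmono : ∀ k, chainOf v 𝒩 x k ⊆ chainOf v 𝒩 x (k + 1) := by
    intro k
    rcases Nat.lt_or_ge k n with h | h
    · obtain ⟨htight, hcard, hcomp, _⟩ := hinv k (by omega)
      have hne : chainOf v 𝒩 x k ≠ Finset.univ := by
        intro hc; rw [hc, Finset.card_univ] at hcard; omega
      have hex : ∃ T', T' ∈ tightSets v x ∧ chainOf v 𝒩 x k ⊆ T' ∧ T'.card = (chainOf v 𝒩 x k).card + 1 ∧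
          ∀ A ∈ 𝒩, A ⊆ chainOf v 𝒩 x k ∨ T' ⊆ A :=
        exists_step hnormal hxC hconv hnested hspan htight hne hcomp
      have hsucc : chainOf v 𝒩 x (k+1) = hex.choose := chainOf_succ_of_ex hex
      rw [hsucc]
      exact hex.choose_spec.2.1
    · rw [huniv k h, huniv (k+1) (by omega)]
  have hdown : ∀ k, IsDownset (chainOf v 𝒩 x k) := by
    intro k
    rcases Nat.lt_or_ge n k with h | h
    · rw [huniv k (by omega)]; exact isDownset_univ
    · exact (hinv k h).1.1
  have hM : MaximalChain (chainOf v 𝒩 x) := ⟨hdown, hmono, fun k hk => (hinv k hk).2.1⟩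
  have hR : RestrictedChain 𝒩 (chainOf v 𝒩 x) := by
    refine ⟨hM, fun A hA => ⟨A.card, ?_⟩⟩
    have := (hinv n le_rfl).2.2.2 A hA (by rw [htop]; exact Finset.subset_univ A)
    exact this
  refine ⟨chainOf v 𝒩 x, hR, ?_⟩
  funext i
  set m := hM.entry i with hm_def
  have hm1 : 1 ≤ m := hM.entry_pos i
  have hmn : m ≤ n := hM.entry_le i
  have himem : i ∈ chainOf v 𝒩 x m := hM.mem_entry i
  have hinot : i ∉ chainOf v 𝒩 x (m - 1) := hM.not_mem_entry_pred i
  -- chainOf v 𝒩 x m = insert i (chainOf v 𝒩 x (m-1))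
  obtain ⟨i', hi'not, hi'ins⟩ := hM.step (k := m - 1) (by omega)
  rw [show m - 1 + 1 = m from by omega] at hi'ins
  have hii' : i = i' := by
    rcases Finset.mem_insert.1 (hi'ins ▸ himem) with h | h
    · exact h
    · exact absurd h hinot
  have hxi : x i = v (chainOf v 𝒩 x m) - v (chainOf v 𝒩 x (m - 1)) := by
    have h1 : ∑ a ∈ chainOf v 𝒩 x m, x a = v (chainOf v 𝒩 x m) := (hinv m hmn).1.2
    have h2 : ∑ a ∈ chainOf v 𝒩 x (m-1), x a = v (chainOf v 𝒩 x (m-1)) := (hinv (m-1) (by omega)).1.2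
    have h3 : ∑ a ∈ chainOf v 𝒩 x m, x a = x i + ∑ a ∈ chainOf v 𝒩 x (m-1), x a := by
      rw [hi'ins, ← hii', Finset.sum_insert hinot]
    rw [h1, h2] at h3
    linarith
  have hmarg : marginal v (chainOf v 𝒩 x) i = v (chainOf v 𝒩 x m) - v (chainOf v 𝒩 x (m - 1)) := by
    rw [marginal, hm_def]
    rfl
  rw [hxi, hmarg]

end Build
/-- for a nested normal collection `𝒩` and a convex game `v` on `O(N)`,
the restricted core equals the restricted Weber set. -/
theorem restrictedCore_eq_restrictedWeber_of_convex
    [Fintype ι] [DecidableEq ι] [PartialOrder ι] (𝒩 : Finset (Finset ι))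
    (hnormal : NormalCollection 𝒩) (hnested : Nested 𝒩)
    (v : Finset ι → ℝ) (hv : v ∅ = 0)
    (hconv : ∀ S T : Finset ι, IsDownset S → IsDownset T →
      v S + v T ≤ v (S ∪ T) + v (S ∩ T)) :
    restrictedCore 𝒩 v = restrictedWeber 𝒩 v := by
  classical
  set M : Set (ι → ℝ) :=
    {x | ∃ S : ℕ → Finset ι, RestrictedChain 𝒩 S ∧ x = marginal v S} with hM_def
  have hMsub : M ⊆ restrictedCore 𝒩 v := by
    rintro x ⟨S, hS, rfl⟩
    exact hS.marginal_mem_restrictedCore hv hconv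
  have hMfin : M.Finite := by
    apply Set.Finite.subset (Set.finite_range
      (fun (g : ι → Finset ι × Finset ι) => fun i => v (g i).1 - v (g i).2))
    rintro x ⟨S, _, rfl⟩
    exact ⟨fun i => (S (sInf {k | i ∈ S k}), S (sInf {k | i ∈ S k} - 1)), rfl⟩
  apply Set.Subset.antisymm
  · -- hard direction
    have hcomp : IsCompact (restrictedCore 𝒩 v) :=
      Metric.isCompact_of_isClosed_isBounded isClosed_restrictedCore
        (bounded_restrictedCore hnormal)
    have hKM := closure_convexHull_extremePoints hcomp convex_restrictedCore
    have hExt : (restrictedCore 𝒩 v).extremePoints ℝ ⊆ M := by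
      intro x hx
      obtain ⟨S, hS, hxm⟩ := extreme_is_marginal hnormal hnested hv hconv hx
      exact ⟨S, hS, hxm⟩
    calc restrictedCore 𝒩 v
        = closure (convexHull ℝ ((restrictedCore 𝒩 v).extremePoints ℝ)) := hKM.symm
      _ ⊆ closure (convexHull ℝ M) := closure_mono (convexHull_mono hExt)
      _ = convexHull ℝ M := (Set.Finite.isClosed_convexHull (𝕜 := ℝ) hMfin).closure_eq
      _ = restrictedWeber 𝒩 v := rfl
  · exact convexHull_min hMsub convex_restrictedCore
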